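/- arXiv:2306.12332 — 4 statements merged into one kernel-verified Lean document; each statement's English description precedes it below -/
import Mathlib

section
/- With the notation of the previous statement (negative psh functions $u_1,\dots,u_m$, point $x_0$ with finite values, $E_\delta$ as above, $c_r=\mathrm{Leb}(B(x_0,r))$), for every negative plurisubharmonic $u'$ with $u'(x_0)>-\infty$ one has $c_r^{-1}\int_{B(x_0,r)\setminus E_\delta} u'\,d\mathrm{Leb}\to u'(x_0)$ as $r\to 0$. -/
open MeasureTheory Metric Filter
open scoped ENNReal Topology

noncomputable section

/-- `ℂ^k` with its Euclidean structure. -/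
abbrev Ck (k : ℕ) := EuclideanSpace ℂ (Fin k)

instance (k : ℕ) : MeasurableSpace (Ck k) := borel _
instance (k : ℕ) : BorelSpace (Ck k) := ⟨rfl⟩

/-- A plurisubharmonic function on an open set `U ⊆ ℂ^k`, with values in `ℝ ∪ {-∞}`
(modeled as `EReal`): upper semicontinuous, nowhere `+∞`, locally integrable with `-∞` locus
Lebesgue-negligible, and satisfying the sub-mean value inequality on closed balls. -/
structure IsPSH {k : ℕ} (U : Set (Ck k)) (u : Ck k → EReal) : Prop where
  ne_top : ∀ x ∈ U, u x ≠ ⊤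
  bot_null : volume {x ∈ U | u x = ⊥} = 0
  loc_int : LocallyIntegrableOn (fun y => (u y).toReal) U volume
  usc : UpperSemicontinuousOn u U
  submean : ∀ x ∈ U, ∀ r > 0, closedBall x r ⊆ U →
    u x ≤ ((⨍ y in closedBall x r, (u y).toReal ∂volume : ℝ) : EReal)

namespace Stmt2Aux

variable {k : ℕ}

lemma sphere_null (x : Ck k) {r : ℝ} (hr : 0 < r) : volume (sphere x r) = 0 := by
  cases subsingleton_or_nontrivial (Ck k) with
  | inl h =>
    have : sphere x r = ∅ := by
      ext y; simp only [mem_sphere, Set.mem_empty_iff_false, iff_false]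
      have : y = x := Subsingleton.elim _ _
      simp [this]; exact hr.ne
    simp [this]
  | inr h => exact Measure.addHaar_sphere volume x r

lemma ball_ae_closedBall (x : Ck k) {r : ℝ} (hr : 0 < r) :
    ball x r =ᵐ[volume] closedBall x r := by
  rw [MeasureTheory.ae_eq_set]
  constructor
  · simp [Set.diff_eq_empty.2 ball_subset_closedBall]
  · refine measure_mono_null (fun y hy => ?_) (sphere_null x hr)
    rcases hy with ⟨h1, h2⟩
    simp only [mem_closedBall] at h1
    simp only [mem_ball, not_lt] at h2
    exact le_antisymm h1 h2

lemma ereal_le_sub_iff (a : EReal) (c d : ℝ) :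
    (d : EReal) ≤ a - (c : EReal) ↔ (((c + d : ℝ)) : EReal) ≤ a := by
  induction a using EReal.rec with
  | bot => simp
  | top => simp
  | coe t =>
    rw [← EReal.coe_sub, EReal.coe_le_coe_iff, EReal.coe_le_coe_iff]
    constructor <;> intro h <;> linarith

lemma ereal_sub_ge_iff (a : EReal) (c d : ℝ) :
    (d : EReal) ≤ (c : EReal) - a ↔ a ≤ (((c - d : ℝ)) : EReal) := by
  induction a using EReal.rec with
  | bot => simp
  | top =>
    simp only [EReal.sub_top, top_le_iff]
    constructor
    · intro h; exact absurd h (by simp)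
    · intro h; exact absurd h (EReal.coe_ne_top _)
  | coe t =>
    rw [← EReal.coe_sub, EReal.coe_le_coe_iff, EReal.coe_le_coe_iff]
    constructor <;> intro h <;> linarith

lemma isOpen_lt_set (u : Ck k → EReal) (husc : UpperSemicontinuousOn u (ball (0 : Ck k) 1))
    (c : EReal) : IsOpen {x | x ∈ ball (0 : Ck k) 1 ∧ u x < c} := by
  rw [isOpen_iff_mem_nhds]
  rintro x ⟨hxU, hxc⟩
  have h1 := husc x hxU c hxc
  rw [isOpen_ball.nhdsWithin_eq hxU] at h1
  exact Filter.inter_mem (isOpen_ball.mem_nhds hxU) h1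

lemma meas_le_set (u : Ck k → EReal) (husc : UpperSemicontinuousOn u (ball (0 : Ck k) 1))
    (c : ℝ) : MeasurableSet {x | x ∈ ball (0 : Ck k) 1 ∧ u x ≤ (c : EReal)} := by
  have heq : {x | x ∈ ball (0 : Ck k) 1 ∧ u x ≤ (c : EReal)}
      = ⋂ q ∈ {q : ℚ | (c : EReal) < ((q : ℝ) : EReal)},
          {x | x ∈ ball (0 : Ck k) 1 ∧ u x < ((q : ℝ) : EReal)} := by
    ext x
    simp only [Set.mem_setOf_eq, Set.mem_iInter]
    constructor
    · rintro ⟨hx, hc⟩ q hq; exact ⟨hx, lt_of_le_of_lt hc hq⟩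
    · intro h
      obtain ⟨q0, hq0⟩ := exists_rat_gt c
      have hq0' : (c : EReal) < ((q0 : ℝ) : EReal) := EReal.coe_lt_coe_iff.2 hq0
      refine ⟨(h q0 hq0').1, ?_⟩
      by_contra hc
      rw [not_le] at hc
      obtain ⟨q, hq1, hq2⟩ := EReal.exists_rat_btwn_of_lt hc
      exact absurd (h q hq1).2 (not_lt.2 hq2.le)
  rw [heq]
  exact MeasurableSet.biInter (Set.to_countable _)
    (fun q _ => (isOpen_lt_set u husc _).measurableSet)

lemma meas_ge_set (u : Ck k → EReal) (husc : UpperSemicontinuousOn u (ball (0 : Ck k) 1))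
    (c : EReal) : MeasurableSet {x | x ∈ ball (0 : Ck k) 1 ∧ c ≤ u x} := by
  have heq : {x | x ∈ ball (0 : Ck k) 1 ∧ c ≤ u x}
      = ball (0 : Ck k) 1 \ {x | x ∈ ball (0 : Ck k) 1 ∧ u x < c} := by
    ext x
    simp only [Set.mem_setOf_eq, Set.mem_diff]
    constructor
    · rintro ⟨hx, h⟩; exact ⟨hx, fun hc => absurd hc.2 (not_lt.2 h)⟩
    · rintro ⟨hx, h⟩; exact ⟨hx, not_lt.1 fun hc => h ⟨hx, hc⟩⟩
  rw [heq]
  exact measurableSet_ball.diff (isOpen_lt_set u husc c).measurableSet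

/-- Upper semicontinuity: eventually all small balls around `x0` lie in `{u < b}`. -/
lemma usc_ev (u : Ck k → EReal) (husc : UpperSemicontinuousOn u (ball (0 : Ck k) 1))
    (x0 : Ck k) (hx0 : x0 ∈ ball (0 : Ck k) 1) {b : EReal} (hb : u x0 < b) :
    ∀ᶠ r in 𝓝[>] (0 : ℝ), ∀ y ∈ ball x0 r, u y < b := by
  have h1 := husc x0 hx0 b hb
  rw [isOpen_ball.nhdsWithin_eq hx0] at h1
  obtain ⟨r1, hr1, hball⟩ := Metric.eventually_nhds_iff_ball.1 h1
  filter_upwards [Ioo_mem_nhdsGT_of_mem ⟨le_refl (0 : ℝ), hr1⟩] with r hr y hy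
  exact hball y (ball_subset_ball hr.2.le hy)

/-- Lemma A: the ball averages of a psh function finite at `x0` converge to the value. -/
lemma lemA (u : Ck k → EReal) (hu : IsPSH (ball (0 : Ck k) 1) u)
    (x0 : Ck k) (hx0 : x0 ∈ ball (0 : Ck k) 1) (hfin : u x0 ≠ ⊥) :
    Tendsto (fun r : ℝ =>
        (∫ y in ball x0 r, (u y).toReal ∂volume) / (volume (ball x0 r)).toReal)
      (𝓝[>] 0) (𝓝 ((u x0).toReal)) := by
  obtain ⟨R0, hR0, hR0sub⟩ : ∃ R > 0, closedBall x0 R ⊆ ball (0 : Ck k) 1 := by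
    obtain ⟨R, hR, h⟩ := nhds_basis_closedBall.mem_iff.1 (isOpen_ball.mem_nhds hx0)
    exact ⟨R, hR, h⟩
  set c := (u x0).toReal with hc
  have hne_top : u x0 ≠ ⊤ := hu.ne_top x0 hx0
  have hcoe : ((c : ℝ) : EReal) = u x0 := EReal.coe_toReal hne_top hfin
  have hballU : ∀ {r : ℝ}, r ≤ R0 → ball x0 r ⊆ ball (0 : Ck k) 1 := fun hr =>
    (ball_subset_closedBall.trans (closedBall_subset_closedBall hr)).trans hR0sub
  have hInt : ∀ {r : ℝ}, r ≤ R0 →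
      IntegrableOn (fun y => (u y).toReal) (closedBall x0 r) volume := fun {r} hr =>
    hu.loc_int.integrableOn_compact_subset
      ((closedBall_subset_closedBall hr).trans hR0sub) (isCompact_closedBall _ _)
  have hIntB : ∀ {r : ℝ}, r ≤ R0 →
      IntegrableOn (fun y => (u y).toReal) (ball x0 r) volume := fun {r} hr =>
    (hInt hr).mono_set ball_subset_closedBall
  have haeBot : ∀ {r : ℝ}, r ≤ R0 →
      (∀ᵐ y ∂volume.restrict (ball x0 r), u y ≠ ⊥) := by
    intro r hr
    have h0 : ∀ᵐ y ∂volume, y ∉ {x ∈ ball (0 : Ck k) 1 | u x = ⊥} :=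
      measure_eq_zero_iff_ae_notMem.1 hu.bot_null
    rw [ae_restrict_iff' measurableSet_ball]
    filter_upwards [h0] with y hy hyr hbot
    exact hy ⟨hballU hr hyr, hbot⟩
  -- lower bound
  have hlow : ∀ {r : ℝ}, 0 < r → r ≤ R0 →
      c ≤ (∫ y in ball x0 r, (u y).toReal ∂volume) / (volume (ball x0 r)).toReal := by
    intro r hr hrR
    have hsub := hu.submean x0 hx0 r hr ((closedBall_subset_closedBall hrR).trans hR0sub)
    have h1 : c ≤ ⨍ y in closedBall x0 r, (u y).toReal ∂volume := by
      have h2 := EReal.toReal_le_toReal hsub hfin (EReal.coe_ne_top _)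
      simpa using h2
    rw [setAverage_eq] at h1
    have hm : volume (ball x0 r) = volume (closedBall x0 r) :=
      measure_congr (ball_ae_closedBall x0 hr)
    have hi : ∫ y in ball x0 r, (u y).toReal ∂volume
        = ∫ y in closedBall x0 r, (u y).toReal ∂volume :=
      setIntegral_congr_set (ball_ae_closedBall x0 hr)
    rw [hi, hm, div_eq_inv_mul, ← smul_eq_mul]
    exact h1
  -- upper bound
  have hup : ∀ ε > (0 : ℝ), ∀ᶠ r in 𝓝[>] (0 : ℝ),
      (∫ y in ball x0 r, (u y).toReal ∂volume) / (volume (ball x0 r)).toReal ≤ c + ε := by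
    intro ε hε
    have hlt : u x0 < (((c + ε : ℝ)) : EReal) := by
      rw [← hcoe]; exact_mod_cast lt_add_of_pos_right c hε
    filter_upwards [usc_ev u hu.usc x0 hx0 hlt,
      Ioo_mem_nhdsGT_of_mem ⟨le_refl (0 : ℝ), hR0⟩] with r husc hr
    obtain ⟨hr0, hrR⟩ := hr
    have hvol0 : 0 < (volume (ball x0 r)).toReal :=
      ENNReal.toReal_pos (measure_ball_pos _ _ hr0).ne' measure_ball_lt_top.ne
    rw [div_le_iff₀ hvol0]
    have hb : ∫ y in ball x0 r, (u y).toReal ∂volume ≤ ∫ _ in ball x0 r, (c + ε) ∂volume := by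
      refine setIntegral_mono_ae_restrict (hIntB hrR.le)
        (integrableOn_const (measure_ball_lt_top).ne) ?_
      filter_upwards [haeBot hrR.le, ae_restrict_mem measurableSet_ball] with y hy hymem
      have hlt2 : u y < (((c + ε : ℝ)) : EReal) := husc y hymem
      have h3 := EReal.toReal_le_toReal hlt2.le hy (EReal.coe_ne_top _)
      simpa only [EReal.toReal_coe] using h3
    calc ∫ y in ball x0 r, (u y).toReal ∂volume
        ≤ ∫ _ in ball x0 r, (c + ε) ∂volume := hb
      _ = (volume (ball x0 r)).toReal • (c + ε) := setIntegral_const _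
      _ = (c + ε) * (volume (ball x0 r)).toReal := by rw [smul_eq_mul, mul_comm]
  rw [Metric.tendsto_nhds]
  intro ε hε
  filter_upwards [hup (ε / 2) (half_pos hε),
    Ioo_mem_nhdsGT_of_mem ⟨le_refl (0 : ℝ), hR0⟩] with r h1 h2
  have hl := hlow h2.1 h2.2.le
  rw [Real.dist_eq, abs_lt]
  constructor <;> linarith


lemma intB (u : Ck k → EReal) (hu : IsPSH (ball (0 : Ck k) 1) u) {x0 : Ck k} {R0 : ℝ}
    (hsub : closedBall x0 R0 ⊆ ball (0 : Ck k) 1) {r : ℝ} (hr : r ≤ R0) :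
    IntegrableOn (fun y => (u y).toReal) (ball x0 r) volume :=
  (hu.loc_int.integrableOn_compact_subset ((closedBall_subset_closedBall hr).trans hsub)
    (isCompact_closedBall _ _)).mono_set ball_subset_closedBall

lemma aeBot (u : Ck k → EReal) (hu : IsPSH (ball (0 : Ck k) 1) u) {x0 : Ck k} {R0 : ℝ}
    (hsub : closedBall x0 R0 ⊆ ball (0 : Ck k) 1) {r : ℝ} (hr : r ≤ R0) :
    ∀ᵐ y ∂volume.restrict (ball x0 r), u y ≠ ⊥ := by
  have h0 : ∀ᵐ y ∂volume, y ∉ {x ∈ ball (0 : Ck k) 1 | u x = ⊥} :=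
    measure_eq_zero_iff_ae_notMem.1 hu.bot_null
  rw [ae_restrict_iff' measurableSet_ball]
  filter_upwards [h0] with y hy hyr hbot
  exact hy ⟨((ball_subset_closedBall.trans (closedBall_subset_closedBall hr)).trans hsub) hyr,
    hbot⟩

lemma lemA' (u : Ck k → EReal) (hu : IsPSH (ball (0 : Ck k) 1) u)
    (x0 : Ck k) (hx0 : x0 ∈ ball (0 : Ck k) 1) (hfin : u x0 ≠ ⊥) {ε : ℝ} (hε : 0 < ε) :
    ∀ᶠ r in 𝓝[>] (0 : ℝ),
      |(∫ y in ball x0 r, (u y).toReal ∂volume) - (u x0).toReal * (volume (ball x0 r)).toReal|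
        ≤ ε * (volume (ball x0 r)).toReal := by
  filter_upwards [Metric.tendsto_nhds.1 (lemA u hu x0 hx0 hfin) ε hε, self_mem_nhdsWithin]
    with r h1 h2
  have hr0 : (0 : ℝ) < r := h2
  have hV : 0 < (volume (ball x0 r)).toReal :=
    ENNReal.toReal_pos (measure_ball_pos _ _ hr0).ne' measure_ball_lt_top.ne
  rw [Real.dist_eq] at h1
  have heq : (∫ y in ball x0 r, (u y).toReal ∂volume)
        - (u x0).toReal * (volume (ball x0 r)).toReal
      = ((∫ y in ball x0 r, (u y).toReal ∂volume) / (volume (ball x0 r)).toReal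
          - (u x0).toReal) * (volume (ball x0 r)).toReal := by
    rw [sub_mul, div_mul_cancel₀ _ hV.ne']
  rw [heq, abs_mul, abs_of_pos hV]
  exact mul_le_mul_of_nonneg_right h1.le hV.le

lemma cheby_low {x0 : Ck k} {r d : ℝ} (g : Ck k → ℝ)
    (hg : IntegrableOn g (ball x0 r) volume) {S : Set (Ck k)} (hSsub : S ⊆ ball x0 r)
    (hbound : ∀ᵐ y ∂volume.restrict S, d ≤ g y) :
    d * (volume S).toReal ≤ ∫ y in S, g y ∂volume := by
  have h1 : ∫ _ in S, d ∂volume ≤ ∫ y in S, g y ∂volume :=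
    setIntegral_mono_ae_restrict
      (integrableOn_const ((lt_of_le_of_lt (measure_mono hSsub) measure_ball_lt_top)).ne)
      (hg.mono_set hSsub) hbound
  simpa [setIntegral_const, smul_eq_mul, mul_comm, measureReal_def] using h1

lemma key_ineq {x0 : Ck k} {r ε : ℝ} (hε : 0 ≤ ε) (g : Ck k → ℝ)
    (hg : IntegrableOn g (ball x0 r) volume) {S : Set (Ck k)} (hS : MeasurableSet S)
    (hSsub : S ⊆ ball x0 r) (hbound : ∀ᵐ y ∂volume.restrict (ball x0 r), -ε ≤ g y) :
    ∫ y in S, g y ∂volume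
      ≤ (∫ y in ball x0 r, g y ∂volume) + ε * (volume (ball x0 r)).toReal := by
  have hdiff : ∫ y in ball x0 r \ S, g y ∂volume
      = (∫ y in ball x0 r, g y ∂volume) - ∫ y in S, g y ∂volume := integral_diff hS hg hSsub
  have hlow : (-ε) * (volume (ball x0 r \ S)).toReal ≤ ∫ y in ball x0 r \ S, g y ∂volume :=
    cheby_low g hg Set.diff_subset (ae_restrict_of_ae_restrict_of_subset Set.diff_subset hbound)
  have hVle : (volume (ball x0 r \ S)).toReal ≤ (volume (ball x0 r)).toReal :=
    ENNReal.toReal_mono measure_ball_lt_top.ne (measure_mono Set.diff_subset)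
  have h2 : ε * (volume (ball x0 r \ S)).toReal ≤ ε * (volume (ball x0 r)).toReal :=
    mul_le_mul_of_nonneg_left hVle hε
  linarith

lemma gbound (u : Ck k → EReal) (hu : IsPSH (ball (0 : Ck k) 1) u)
    (x0 : Ck k) (hx0 : x0 ∈ ball (0 : Ck k) 1) (hfin : u x0 ≠ ⊥)
    {R0 : ℝ} (hR0 : 0 < R0) (hsub : closedBall x0 R0 ⊆ ball (0 : Ck k) 1) {ε : ℝ} (hε : 0 < ε) :
    ∀ᶠ r in 𝓝[>] (0 : ℝ), ∀ᵐ y ∂volume.restrict (ball x0 r),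
      -ε ≤ (u x0).toReal - (u y).toReal := by
  have hcoe : (((u x0).toReal : ℝ) : EReal) = u x0 := EReal.coe_toReal (hu.ne_top x0 hx0) hfin
  have hlt : u x0 < ((((u x0).toReal + ε : ℝ)) : EReal) := by
    rw [← hcoe]; exact_mod_cast lt_add_of_pos_right _ hε
  filter_upwards [usc_ev u hu.usc x0 hx0 hlt, Ioo_mem_nhdsGT_of_mem ⟨le_refl (0 : ℝ), hR0⟩]
    with r husc hr
  have hballU : ball x0 r ⊆ ball (0 : Ck k) 1 :=
    (ball_subset_closedBall.trans (closedBall_subset_closedBall hr.2.le)).trans hsub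
  filter_upwards [aeBot u hu hsub hr.2.le, ae_restrict_mem measurableSet_ball] with y hy hymem
  have hlt2 := husc y hymem
  have h3 := EReal.toReal_le_toReal hlt2.le hy (EReal.coe_ne_top _)
  simp only [EReal.toReal_coe] at h3
  linarith

end Stmt2Aux


open Stmt2Aux in
/-- with `E_δ = ⋃ⱼ {|uⱼ - uⱼ(x₀)| ≥ δ}` for negative psh `uⱼ` finite at `x₀`,
one has `c_r⁻¹ ∫_{B(x₀,r) \ E_δ} u' dLeb → u'(x₀)` for every negative psh `u'` finite at `x₀`. -/
theorem stmt2 (k m : ℕ) (u : Fin m → Ck k → EReal)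
    (hu : ∀ j, IsPSH (ball (0 : Ck k) 1) (u j))
    (hneg : ∀ j, ∀ x ∈ ball (0 : Ck k) 1, u j x ≤ 0)
    (x0 : Ck k) (hx0 : x0 ∈ ball (0 : Ck k) 1) (hfin : ∀ j, u j x0 ≠ ⊥)
    (δ : ℝ) (hδ : 0 < δ)
    (u' : Ck k → EReal) (hu' : IsPSH (ball (0 : Ck k) 1) u')
    (hneg' : ∀ x ∈ ball (0 : Ck k) 1, u' x ≤ 0) (hfin' : u' x0 ≠ ⊥) :
    Tendsto (fun r : ℝ =>
        (∫ y in ball x0 r \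
            (⋃ j, {x | (δ : EReal) ≤ max (u j x - u j x0) (u j x0 - u j x)}),
          (u' y).toReal ∂volume) / (volume (ball x0 r)).toReal)
      (𝓝[>] 0) (𝓝 ((u' x0).toReal)) := by
  classical
  obtain ⟨R0, hR0, hR0sub⟩ : ∃ R > 0, closedBall x0 R ⊆ ball (0 : Ck k) 1 := by
    obtain ⟨R, hR, h⟩ := nhds_basis_closedBall.mem_iff.1 (isOpen_ball.mem_nhds hx0)
    exact ⟨R, hR, h⟩
  have hballU : ∀ {r : ℝ}, r ≤ R0 → ball x0 r ⊆ ball (0 : Ck k) 1 := fun {r} hr =>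
    (ball_subset_closedBall.trans (closedBall_subset_closedBall hr)).trans hR0sub
  set M : Fin m → Set (Ck k) := fun j =>
    {x | x ∈ ball (0 : Ck k) 1 ∧ ((((u j x0).toReal + δ : ℝ)) : EReal) ≤ u j x}
      ∪ {x | x ∈ ball (0 : Ck k) 1 ∧ u j x ≤ ((((u j x0).toReal - δ : ℝ)) : EReal)} with hM
  have hMmeas : ∀ j, MeasurableSet (M j) := fun j =>
    (meas_ge_set _ (hu j).usc _).union (meas_le_set _ (hu j).usc _)
  have hMumeas : MeasurableSet (⋃ j, M j) := MeasurableSet.iUnion hMmeas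
  have hcoej : ∀ j, (((u j x0).toReal : ℝ) : EReal) = u j x0 := fun j =>
    EReal.coe_toReal ((hu j).ne_top x0 hx0) (hfin j)
  have hEM : ∀ x ∈ ball (0 : Ck k) 1,
      (x ∈ (⋃ j, {x | (δ : EReal) ≤ max (u j x - u j x0) (u j x0 - u j x)}) ↔ x ∈ ⋃ j, M j) := by
    intro x hx
    simp only [Set.mem_iUnion]
    refine exists_congr fun j => ?_
    rw [Set.mem_setOf_eq, ← hcoej j, le_max_iff, ereal_le_sub_iff, ereal_sub_ge_iff]
    simp only [hM, Set.mem_union, Set.mem_setOf_eq]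
    tauto
  -- per-j smallness of the bad set
  have hBj : ∀ (j : Fin m), ∀ ε > (0 : ℝ), ∀ᶠ r in 𝓝[>] (0 : ℝ),
      (volume (ball x0 r ∩ M j)).toReal ≤ ε * (volume (ball x0 r)).toReal := by
    intro j ε hε
    have hε1 : (0 : ℝ) < δ * ε / 2 := by positivity
    have hlt : u j x0 < ((((u j x0).toReal + δ : ℝ)) : EReal) := by
      rw [← hcoej j]; exact_mod_cast lt_add_of_pos_right _ hδ
    filter_upwards [usc_ev (u j) (hu j).usc x0 hx0 hlt,
      gbound (u j) (hu j) x0 hx0 (hfin j) hR0 hR0sub hε1,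
      lemA' (u j) (hu j) x0 hx0 (hfin j) hε1,
      Ioo_mem_nhdsGT_of_mem ⟨le_refl (0 : ℝ), hR0⟩] with r husc hgb hA hr
    obtain ⟨hr0, hrR⟩ := hr
    have hVpos : 0 < (volume (ball x0 r)).toReal :=
      ENNReal.toReal_pos (measure_ball_pos _ _ hr0).ne' measure_ball_lt_top.ne
    set S := ball x0 r ∩
      {x | x ∈ ball (0 : Ck k) 1 ∧ u j x ≤ ((((u j x0).toReal - δ : ℝ)) : EReal)} with hSdef
    have hSmeas : MeasurableSet S := measurableSet_ball.inter (meas_le_set _ (hu j).usc _)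
    have hSsub : S ⊆ ball x0 r := Set.inter_subset_left
    have hsubS : ball x0 r ∩ M j ⊆ S := by
      rintro y ⟨hy, hyM⟩
      rcases hyM with h | h
      · exact absurd (husc y hy) (not_lt.2 h.2)
      · exact ⟨hy, h⟩
    have hgInt : IntegrableOn (fun y => (u j x0).toReal - (u j y).toReal) (ball x0 r) volume :=
      (integrableOn_const (measure_ball_lt_top).ne).sub (intB (u j) (hu j) hR0sub hrR.le)
    have hchb : δ * (volume S).toReal
        ≤ ∫ y in S, ((u j x0).toReal - (u j y).toReal) ∂volume := by
      refine cheby_low _ hgInt hSsub ?_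
      filter_upwards [ae_restrict_of_ae_restrict_of_subset hSsub
          (aeBot (u j) (hu j) hR0sub hrR.le), ae_restrict_mem hSmeas] with y hy hymem
      obtain ⟨-, hyU, hyle⟩ := hymem
      have h3 := EReal.toReal_le_toReal hyle hy (EReal.coe_ne_top _)
      simp only [EReal.toReal_coe] at h3
      linarith
    have hkey : ∫ y in S, ((u j x0).toReal - (u j y).toReal) ∂volume
        ≤ (∫ y in ball x0 r, ((u j x0).toReal - (u j y).toReal) ∂volume)
            + (δ * ε / 2) * (volume (ball x0 r)).toReal :=
      key_ineq hε1.le _ hgInt hSmeas hSsub hgb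
    have hbg : ∫ y in ball x0 r, ((u j x0).toReal - (u j y).toReal) ∂volume
        = (u j x0).toReal * (volume (ball x0 r)).toReal
            - ∫ y in ball x0 r, (u j y).toReal ∂volume := by
      rw [integral_sub (integrableOn_const (C := (u j x0).toReal) (measure_ball_lt_top).ne)
        (intB (u j) (hu j) hR0sub hrR.le), setIntegral_const, measureReal_def, smul_eq_mul, mul_comm]
    have hA2 : ∫ y in ball x0 r, ((u j x0).toReal - (u j y).toReal) ∂volume
        ≤ (δ * ε / 2) * (volume (ball x0 r)).toReal := by
      rw [hbg]
      have h4 := (abs_le.1 hA).1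
      linarith
    have hmono : (volume (ball x0 r ∩ M j)).toReal ≤ (volume S).toReal :=
      ENNReal.toReal_mono (lt_of_le_of_lt (measure_mono hSsub) measure_ball_lt_top).ne
        (measure_mono hsubS)
    have hfin2 : (volume S).toReal ≤ ε * (volume (ball x0 r)).toReal := by
      have h5 : δ * (volume S).toReal ≤ δ * (ε * (volume (ball x0 r)).toReal) := by
        calc δ * (volume S).toReal
            ≤ (δ * ε / 2) * (volume (ball x0 r)).toReal
                + (δ * ε / 2) * (volume (ball x0 r)).toReal := by linarith
          _ = δ * (ε * (volume (ball x0 r)).toReal) := by ring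
      exact le_of_mul_le_mul_left h5 hδ
    linarith
  -- smallness of the union
  have hBM : ∀ ε > (0 : ℝ), ∀ᶠ r in 𝓝[>] (0 : ℝ),
      (volume (ball x0 r ∩ ⋃ j, M j)).toReal ≤ ε * (volume (ball x0 r)).toReal := by
    intro ε hε
    have hm1 : (0 : ℝ) < (m : ℝ) + 1 := by positivity
    have hεm : 0 < ε / ((m : ℝ) + 1) := div_pos hε hm1
    filter_upwards [eventually_all.2 (fun j => hBj j _ hεm)] with r hj
    have hV : 0 ≤ (volume (ball x0 r)).toReal := ENNReal.toReal_nonneg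
    have ht : ε / ((m : ℝ) + 1) * ((m : ℝ) + 1) = ε := div_mul_cancel₀ ε hm1.ne'
    calc (volume (ball x0 r ∩ ⋃ j, M j)).toReal
        = (volume (⋃ j, ball x0 r ∩ M j)).toReal := by rw [Set.inter_iUnion]
      _ ≤ (∑ j, volume (ball x0 r ∩ M j)).toReal := ENNReal.toReal_mono
            (ENNReal.sum_lt_top.2 fun j _ =>
              lt_of_le_of_lt (measure_mono Set.inter_subset_left) measure_ball_lt_top).ne
            (measure_iUnion_fintype_le volume _)
      _ = ∑ j, (volume (ball x0 r ∩ M j)).toReal := ENNReal.toReal_sum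
            (fun j _ =>
              (lt_of_le_of_lt (measure_mono Set.inter_subset_left) measure_ball_lt_top).ne)
      _ ≤ ∑ _j : Fin m, ε / ((m : ℝ) + 1) * (volume (ball x0 r)).toReal :=
            Finset.sum_le_sum (fun j _ => hj j)
      _ = (m : ℝ) * (ε / ((m : ℝ) + 1) * (volume (ball x0 r)).toReal) := by
            rw [Finset.sum_const, Finset.card_univ, Fintype.card_fin, nsmul_eq_mul]
      _ ≤ ε * (volume (ball x0 r)).toReal := by nlinarith [hεm.le]
  -- the contribution of the bad set vanishes
  have hT : Tendsto (fun r : ℝ =>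
      (∫ y in ball x0 r ∩ ⋃ j, M j, (u' y).toReal ∂volume) / (volume (ball x0 r)).toReal)
      (𝓝[>] 0) (𝓝 0) := by
    rw [Metric.tendsto_nhds]
    intro ε hε
    have hL : (0 : ℝ) < |(u' x0).toReal| + 3 := by positivity
    have hε1 : (0 : ℝ) < ε / (|(u' x0).toReal| + 3) := div_pos hε hL
    filter_upwards [hBM _ hε1, lemA' u' hu' x0 hx0 hfin' hε1,
      gbound u' hu' x0 hx0 hfin' hR0 hR0sub hε1,
      Ioo_mem_nhdsGT_of_mem ⟨le_refl (0 : ℝ), hR0⟩] with r h1 h2 h3 hr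
    obtain ⟨hr0, hrR⟩ := hr
    have hVpos : 0 < (volume (ball x0 r)).toReal :=
      ENNReal.toReal_pos (measure_ball_pos _ _ hr0).ne' measure_ball_lt_top.ne
    set ε1 := ε / (|(u' x0).toReal| + 3) with hε1def
    have hSsub : (ball x0 r ∩ ⋃ j, M j) ⊆ ball x0 r := Set.inter_subset_left
    have hSmeas : MeasurableSet (ball x0 r ∩ ⋃ j, M j) := measurableSet_ball.inter hMumeas
    have hfInt : IntegrableOn (fun y => (u' y).toReal) (ball x0 r) volume :=
      intB u' hu' hR0sub hrR.le
    have hgInt : IntegrableOn (fun y => (u' x0).toReal - (u' y).toReal) (ball x0 r) volume :=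
      (integrableOn_const (measure_ball_lt_top).ne).sub hfInt
    have hVS0 : 0 ≤ (volume (ball x0 r ∩ ⋃ j, M j)).toReal := ENNReal.toReal_nonneg
    have hVSle : (volume (ball x0 r ∩ ⋃ j, M j)).toReal ≤ (volume (ball x0 r)).toReal :=
      ENNReal.toReal_mono measure_ball_lt_top.ne (measure_mono hSsub)
    -- split the integral
    have hfs : ∫ y in ball x0 r ∩ ⋃ j, M j, (u' y).toReal ∂volume
        = (u' x0).toReal * (volume (ball x0 r ∩ ⋃ j, M j)).toReal
            - ∫ y in ball x0 r ∩ ⋃ j, M j, ((u' x0).toReal - (u' y).toReal) ∂volume := by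
      rw [integral_sub (integrableOn_const (C := (u' x0).toReal) ((lt_of_le_of_lt (measure_mono hSsub) measure_ball_lt_top)).ne)
        (hfInt.mono_set hSsub), setIntegral_const, measureReal_def, smul_eq_mul, mul_comm]
      ring
    -- bounds for the g'-integral over the bad set
    have hup : ∫ y in ball x0 r ∩ ⋃ j, M j, ((u' x0).toReal - (u' y).toReal) ∂volume
        ≤ 2 * (ε1 * (volume (ball x0 r)).toReal) := by
      have hk := key_ineq hε1.le _ hgInt hSmeas hSsub h3
      have hbg : ∫ y in ball x0 r, ((u' x0).toReal - (u' y).toReal) ∂volume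
          = (u' x0).toReal * (volume (ball x0 r)).toReal
              - ∫ y in ball x0 r, (u' y).toReal ∂volume := by
        rw [integral_sub (integrableOn_const (C := (u' x0).toReal) (measure_ball_lt_top).ne) hfInt,
          setIntegral_const, measureReal_def, smul_eq_mul, mul_comm]
      have h4 := (abs_le.1 h2).1
      rw [hbg] at hk
      linarith
    have hlo : -(ε1 * (volume (ball x0 r)).toReal)
        ≤ ∫ y in ball x0 r ∩ ⋃ j, M j, ((u' x0).toReal - (u' y).toReal) ∂volume := by
      have hc := cheby_low (d := -ε1) _ hgInt hSsub
        (ae_restrict_of_ae_restrict_of_subset hSsub h3)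
      have h5 : -ε1 * (volume (ball x0 r)).toReal
          ≤ -ε1 * (volume (ball x0 r ∩ ⋃ j, M j)).toReal := by nlinarith
      linarith
    -- assemble
    have habs : |∫ y in ball x0 r ∩ ⋃ j, M j, (u' y).toReal ∂volume|
        ≤ (|(u' x0).toReal| + 2) * (ε1 * (volume (ball x0 r)).toReal) := by
      rw [hfs]
      have ha : |(u' x0).toReal * (volume (ball x0 r ∩ ⋃ j, M j)).toReal|
          ≤ |(u' x0).toReal| * (ε1 * (volume (ball x0 r)).toReal) := by
        rw [abs_mul]
        exact mul_le_mul_of_nonneg_left (by rwa [abs_of_nonneg hVS0]) (abs_nonneg _)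
      have hb : |∫ y in ball x0 r ∩ ⋃ j, M j, ((u' x0).toReal - (u' y).toReal) ∂volume|
          ≤ 2 * (ε1 * (volume (ball x0 r)).toReal) := by
        rw [abs_le]
        constructor
        · nlinarith [mul_nonneg hε1.le hVpos.le]
        · exact hup
      calc |(u' x0).toReal * (volume (ball x0 r ∩ ⋃ j, M j)).toReal
            - ∫ y in ball x0 r ∩ ⋃ j, M j, ((u' x0).toReal - (u' y).toReal) ∂volume|
          ≤ |(u' x0).toReal * (volume (ball x0 r ∩ ⋃ j, M j)).toReal|
            + |∫ y in ball x0 r ∩ ⋃ j, M j, ((u' x0).toReal - (u' y).toReal) ∂volume| :=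
            abs_sub _ _
        _ ≤ (|(u' x0).toReal| + 2) * (ε1 * (volume (ball x0 r)).toReal) := by nlinarith
    rw [Real.dist_eq, sub_zero, abs_div, abs_of_pos hVpos, div_lt_iff₀ hVpos]
    have hx : (|(u' x0).toReal| + 2) * ε1 < ε := by
      rw [hε1def, mul_div_assoc', div_lt_iff₀ hL]
      nlinarith
    have h6 := mul_lt_mul_of_pos_right hx hVpos
    nlinarith [habs]
  -- final assembly
  have hfinal := (lemA u' hu' x0 hx0 hfin').sub hT
  rw [sub_zero] at hfinal
  refine Tendsto.congr' ?_ hfinal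
  filter_upwards [Ioo_mem_nhdsGT_of_mem ⟨le_refl (0 : ℝ), hR0⟩] with r hr
  have hset : ball x0 r \ (⋃ j, {x | (δ : EReal) ≤ max (u j x - u j x0) (u j x0 - u j x)})
      = ball x0 r \ (ball x0 r ∩ ⋃ j, M j) := by
    ext y
    simp only [Set.mem_diff, Set.mem_inter_iff, not_and]
    constructor
    · rintro ⟨hy, hz⟩
      exact ⟨hy, fun _ hc => hz ((hEM y (hballU hr.2.le hy)).2 hc)⟩
    · rintro ⟨hy, hz⟩
      exact ⟨hy, fun hc => (hz hy) ((hEM y (hballU hr.2.le hy)).1 hc)⟩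
  have hID : ∫ y in ball x0 r \ (ball x0 r ∩ ⋃ j, M j), (u' y).toReal ∂volume
      = (∫ y in ball x0 r, (u' y).toReal ∂volume)
          - ∫ y in ball x0 r ∩ ⋃ j, M j, (u' y).toReal ∂volume :=
    integral_diff (measurableSet_ball.inter hMumeas) (intB u' hu' hR0sub hr.2.le)
      Set.inter_subset_left
  show _ = _
  rw [hset, hID, sub_div]
end
end

section
/- Let $x_0\in\mathbb{B}\subset\mathbb{C}^k$, let $u_1,\dots,u_m$ be bounded plurisubharmonic functions on $\mathbb{B}$, $\delta>0$, and set $V:=\bigcap_{j=1}^m\{x:|u_j(x)-u_j(x_0)|<\delta\}$. Let $u$ be a plurisubharmonic function on $\mathbb{B}$ with $u(x_0)>-\infty$ and $u\le 0$, and $c_r:=\mathrm{Leb}(B(x_0,r))$. Then $c_r^{-1}\int_{B(x_0,r)\setminus V}|u|\,d\mathrm{Leb}\to 0$ as $r\to 0$. -/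
open MeasureTheory Metric Filter
open scoped ENNReal Topology

noncomputable section

set_option maxHeartbeats 2000000 in
/-- for bounded psh `u₁,…,u_m` on the unit ball and
`V = ⋂ⱼ {|uⱼ - uⱼ(x₀)| < δ}` (a plurifine neighborhood of `x₀`), and `u` psh, `u ≤ 0`,
`u(x₀) > -∞`, one has `c_r⁻¹ ∫_{B(x₀,r) \ V} |u| dLeb → 0` as `r → 0⁺`. -/
theorem stmt9 (k m : ℕ) (x0 : Ck k) (hx0 : x0 ∈ ball (0 : Ck k) 1)
    (v : Fin m → Ck k → ℝ)
    (hv : ∀ j, IsPSH (ball (0 : Ck k) 1) (fun x => ((v j x : ℝ) : EReal)))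
    (hvbd : ∀ j, ∃ C : ℝ, ∀ x ∈ ball (0 : Ck k) 1, |v j x| ≤ C)
    (δ : ℝ) (hδ : 0 < δ)
    (u : Ck k → EReal) (hu : IsPSH (ball (0 : Ck k) 1) u)
    (huneg : ∀ x ∈ ball (0 : Ck k) 1, u x ≤ 0) (hufin : u x0 ≠ ⊥) :
    Tendsto (fun r : ℝ =>
        (∫ y in ball x0 r \ {x | ∀ j, |v j x - v j x0| < δ},
          |(u y).toReal| ∂volume) / (volume (ball x0 r)).toReal)
      (𝓝[>] 0) (𝓝 0) := by
  classical
  set B := ball (0 : Ck k) 1 with hBdef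
  set V : Set (Ck k) := {x | ∀ j, |v j x - v j x0| < δ} with hVdef
  have hutop : u x0 ≠ ⊤ := hu.ne_top x0 hx0
  set a : ℝ := (u x0).toReal with hadef
  have hux0 : ((a : ℝ) : EReal) = u x0 := EReal.coe_toReal hutop hufin
  obtain ⟨r1, hr1pos, hr1sub⟩ : ∃ r1 > 0, closedBall x0 r1 ⊆ B := by
    rcases Metric.nhds_basis_closedBall.mem_iff.1 (isOpen_ball.mem_nhds hx0) with ⟨r1, h1, h2⟩
    exact ⟨r1, h1, h2⟩
  -- upper semicontinuity extraction
  have husc : ∀ (w : Ck k → EReal), UpperSemicontinuousOn w B → ∀ b : ℝ, w x0 < (b : EReal) →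
      ∃ ρ > 0, ∀ x ∈ ball x0 ρ ∩ B, w x < (b : EReal) := by
    intro w hw b hb
    have h := hw x0 hx0 (b : EReal) hb
    rcases Metric.mem_nhdsWithin_iff.1 h with ⟨ρ, hρ, hsub⟩
    exact ⟨ρ, hρ, fun x hx => hsub hx⟩
  -- submean value inequality in integral form
  have submean_int : ∀ (w : Ck k → EReal) (b : ℝ), IsPSH B w → w x0 = (b : EReal) →
      ∀ r : ℝ, 0 < r → closedBall x0 r ⊆ B →
      b * (volume (closedBall x0 r)).toReal
        ≤ ∫ y in closedBall x0 r, (w y).toReal ∂volume := by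
    intro w b hw hwb r hr hsub
    have h := hw.submean x0 hx0 r hr hsub
    rw [hwb, EReal.coe_le_coe_iff] at h
    rw [setAverage_eq] at h
    have hcpos : 0 < (volume (closedBall x0 r)).toReal :=
      ENNReal.toReal_pos (ne_of_gt (lt_of_lt_of_le (measure_ball_pos _ x0 hr)
        (measure_mono ball_subset_closedBall))) measure_closedBall_lt_top.ne
    rw [smul_eq_mul, ← div_eq_inv_mul] at h
    exact (le_div_iff₀ hcpos).1 h
  -- integrability of v j on closed balls
  have hvint : ∀ (j : Fin m) (r : ℝ), closedBall x0 r ⊆ B →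
      IntegrableOn (v j) (closedBall x0 r) volume := by
    intro j r hsub
    have h := (hv j).loc_int
    simp only [EReal.toReal_coe] at h
    exact h.integrableOn_compact_subset hsub (isCompact_closedBall x0 r)
  -- eventual inclusion of closed balls
  have hevB : ∀ᶠ r in 𝓝[>] (0:ℝ), closedBall x0 r ⊆ B := by
    filter_upwards [Ioo_mem_nhdsGT_of_mem (Set.mem_Ico.2 ⟨le_refl (0:ℝ), hr1pos⟩)] with r hr
    exact (closedBall_subset_closedBall hr.2.le).trans hr1sub
  -- Step A: measure of the bad set is small relative to the ball
  have measA : ∀ εA : ℝ, 0 < εA → ∀ᶠ r in 𝓝[>] (0:ℝ),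
      (volume (ball x0 r \ V)).toReal ≤ εA * (volume (closedBall x0 r)).toReal := by
    intro εA hεA
    set η : ℝ := min δ (εA * δ / (m + 1)) with hηdef
    have hηpos : 0 < η := lt_min hδ (by positivity)
    have hηδ : η ≤ δ := min_le_left _ _
    have hη2 : η / δ ≤ εA / (m + 1) := by
      rw [div_le_div_iff₀ hδ (by positivity)]
      have := min_le_right δ (εA * δ / (m + 1))
      rw [hηdef]
      calc min δ (εA * δ / (m + 1)) * (m+1) ≤ (εA * δ / (m + 1)) * (m+1) := by
            exact mul_le_mul_of_nonneg_right this (by positivity)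
        _ = εA * δ := by field_simp
    have hev : ∀ j : Fin m, ∀ᶠ r in 𝓝[>] (0:ℝ),
        ∀ x ∈ closedBall x0 r, v j x < v j x0 + η := by
      intro j
      obtain ⟨ρ, hρpos, hρ⟩ := husc _ (hv j).usc (v j x0 + η)
        (by exact_mod_cast lt_add_of_pos_right (v j x0) hηpos)
      filter_upwards [Ioo_mem_nhdsGT_of_mem
        (Set.mem_Ico.2 ⟨le_refl (0:ℝ), lt_min hρpos hr1pos⟩)] with r hr x hx
      have hxB : x ∈ B := hr1sub (closedBall_subset_closedBall
        (hr.2.trans_le (min_le_right _ _)).le hx)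
      have hxρ : x ∈ ball x0 ρ := by
        have : dist x x0 ≤ r := mem_closedBall.1 hx
        exact mem_ball.2 (lt_of_le_of_lt this (hr.2.trans_le (min_le_left _ _)))
      have := hρ x ⟨hxρ, hxB⟩
      exact_mod_cast this
    filter_upwards [eventually_all.2 hev, self_mem_nhdsWithin, hevB] with r hη' hrpos hsubB
    simp only [Set.mem_Ioi] at hrpos
    set cB := closedBall x0 r with hcBdef
    set c : ℝ := (volume cB).toReal with hcdef
    have hcBlt : volume cB < ⊤ := measure_closedBall_lt_top
    have hcnn : 0 ≤ c := ENNReal.toReal_nonneg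
    -- per-j estimate
    have key : ∀ j : Fin m,
        (volume (ball x0 r ∩ {x | v j x ≤ v j x0 - δ})).toReal ≤ η / δ * c := by
      intro j
      have hvj : IntegrableOn (v j) cB volume := hvint j r hsubB
      set g : Ck k → ℝ := fun x => v j x0 + η - v j x with hgdef
      have hconst : Integrable (fun _ : Ck k => v j x0 + η) (volume.restrict cB) :=
        integrableOn_const hcBlt.ne
      have hgint : Integrable g (volume.restrict cB) := hconst.sub hvj
      have hgnn : 0 ≤ᵐ[volume.restrict cB] g := by
        filter_upwards [ae_restrict_mem measurableSet_closedBall] with x hx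
        have := hη' j x hx
        simp only [hgdef, Pi.zero_apply]
        linarith
      have hmark := mul_meas_ge_le_integral_of_nonneg hgnn hgint δ
      have hsm := submean_int _ (v j x0) (hv j) rfl r hrpos hsubB
      simp only [EReal.toReal_coe] at hsm
      have hig : ∫ x in cB, g x ∂volume ≤ η * c := by
        rw [hgdef]
        rw [integral_sub hconst hvj, setIntegral_const, smul_eq_mul]
        have : volume.real cB = c := rfl
        rw [this]
        linarith
      have hss : ball x0 r ∩ {x | v j x ≤ v j x0 - δ} ⊆ {x | δ ≤ g x} ∩ cB := by
        intro x hx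
        refine ⟨?_, ball_subset_closedBall hx.1⟩
        have := hx.2
        simp only [Set.mem_setOf_eq, hgdef] at this ⊢
        linarith
      have hmle : volume (ball x0 r ∩ {x | v j x ≤ v j x0 - δ})
          ≤ (volume.restrict cB) {x | δ ≤ g x} := by
        rw [Measure.restrict_apply' measurableSet_closedBall]
        exact measure_mono hss
      have hfin : (volume.restrict cB) {x | δ ≤ g x} ≠ ⊤ := by
        rw [Measure.restrict_apply' measurableSet_closedBall]
        exact (lt_of_le_of_lt (measure_mono Set.inter_subset_right) hcBlt).ne
      have htR := ENNReal.toReal_mono hfin hmle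
      have := hmark.trans hig
      rw [div_mul_eq_mul_div, le_div_iff₀ hδ]
      calc (volume (ball x0 r ∩ {x | v j x ≤ v j x0 - δ})).toReal * δ
          ≤ ((volume.restrict cB) {x | δ ≤ g x}).toReal * δ :=
            mul_le_mul_of_nonneg_right htR hδ.le
        _ = δ * ((volume.restrict cB) {x | δ ≤ g x}).toReal := mul_comm _ _
        _ ≤ η * c := this
    -- union bound
    have hsub : ball x0 r \ V ⊆ ⋃ j, ball x0 r ∩ {x | v j x ≤ v j x0 - δ} := by
      intro x hx
      obtain ⟨hxb, hxV⟩ := hx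
      simp only [hVdef, Set.mem_setOf_eq, not_forall, not_lt] at hxV
      obtain ⟨j, hj⟩ := hxV
      refine Set.mem_iUnion.2 ⟨j, hxb, ?_⟩
      have hlt := hη' j x (ball_subset_closedBall hxb)
      rcases le_abs.1 hj with h | h
      · simp only [Set.mem_setOf_eq]; linarith
      · simp only [Set.mem_setOf_eq]; linarith
    have hμ : volume (ball x0 r \ V)
        ≤ ∑ j : Fin m, volume (ball x0 r ∩ {x | v j x ≤ v j x0 - δ}) := by
      refine (measure_mono hsub).trans ?_
      exact measure_iUnion_fintype_le _ _
    have hne : (∑ j : Fin m, volume (ball x0 r ∩ {x | v j x ≤ v j x0 - δ})) ≠ ⊤ := by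
      have hle : (∑ j : Fin m, volume (ball x0 r ∩ {x | v j x ≤ v j x0 - δ}))
          ≤ ∑ _j : Fin m, volume cB :=
        Finset.sum_le_sum fun j _ =>
          measure_mono ((Set.inter_subset_left).trans ball_subset_closedBall)
      refine (lt_of_le_of_lt hle ?_).ne
      simp only [Finset.sum_const, Finset.card_univ, Fintype.card_fin, nsmul_eq_mul]
      exact ENNReal.mul_lt_top (by simp) hcBlt
    calc (volume (ball x0 r \ V)).toReal
        ≤ (∑ j : Fin m, volume (ball x0 r ∩ {x | v j x ≤ v j x0 - δ})).toReal :=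
          ENNReal.toReal_mono hne hμ
      _ = ∑ j : Fin m, (volume (ball x0 r ∩ {x | v j x ≤ v j x0 - δ})).toReal :=
          ENNReal.toReal_sum fun j _ => (lt_of_le_of_lt (measure_mono
            ((Set.inter_subset_left).trans ball_subset_closedBall)) hcBlt).ne
      _ ≤ ∑ _j : Fin m, η / δ * c := Finset.sum_le_sum fun j _ => key j
      _ = m * (η / δ * c) := by simp [mul_assoc]
      _ ≤ εA * c := by
          have h1 : (m:ℝ) * (η / δ) ≤ (m:ℝ) * (εA / (m+1)) :=
            mul_le_mul_of_nonneg_left hη2 (Nat.cast_nonneg m)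
          have h2 : (m:ℝ) * (εA / (m+1)) ≤ εA := by
            rw [mul_div_assoc']
            rw [div_le_iff₀ (by positivity)]
            nlinarith [hεA.le, Nat.cast_nonneg (α := ℝ) m]
          nlinarith [hcnn]
  -- Step B: main estimate
  rw [Metric.tendsto_nhds]
  intro ε hε
  set ε' : ℝ := ε / 4 with hε'def
  have hε'pos : 0 < ε' := by positivity
  set M : ℝ := |a| + ε' with hMdef
  have hMpos : 0 < M := by positivity
  set εA : ℝ := ε' / M with hεAdef
  have hεApos : 0 < εA := by positivity
  obtain ⟨ρu, hρupos, hρu⟩ := husc u hu.usc (a + ε') (by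
    rw [← hux0]; exact_mod_cast lt_add_of_pos_right a hε'pos)
  have hevρ : ∀ᶠ r in 𝓝[>] (0:ℝ), r < ρu := by
    filter_upwards [Ioo_mem_nhdsGT_of_mem (Set.mem_Ico.2 ⟨le_refl (0:ℝ), hρupos⟩)] with r hr
    exact hr.2
  filter_upwards [self_mem_nhdsWithin, hevB, hevρ, measA εA hεApos] with r hrpos hsubB hrρ hvolE
  simp only [Set.mem_Ioi] at hrpos
  set cB := closedBall x0 r with hcBdef
  set c : ℝ := (volume cB).toReal with hcdef
  have hcBlt : volume cB < ⊤ := measure_closedBall_lt_top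
  have hcpos : 0 < c :=
    ENNReal.toReal_pos (ne_of_gt (lt_of_lt_of_le (measure_ball_pos _ x0 hrpos)
      (measure_mono ball_subset_closedBall))) hcBlt.ne
  set E := ball x0 r \ V with hEdef
  have hEsub : E ⊆ cB := (Set.diff_subset).trans ball_subset_closedBall
  have hfint : IntegrableOn (fun y => (u y).toReal) cB volume :=
    hu.loc_int.integrableOn_compact_subset hsubB (isCompact_closedBall x0 r)
  have hElt : volume E < ⊤ := lt_of_le_of_lt (measure_mono hEsub) hcBlt
  -- |f| = -f on E
  have habs : ∫ y in E, |(u y).toReal| ∂volume = ∫ y in E, -(u y).toReal ∂volume := by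
    refine integral_congr_ae ?_
    have hBc : (volume.restrict E) Bᶜ = 0 := by
      rw [Measure.restrict_apply isOpen_ball.measurableSet.compl]
      have : Bᶜ ∩ E = ∅ := by
        apply Set.eq_empty_of_forall_notMem
        intro x hx
        exact hx.1 (hsubB (hEsub hx.2))
      rw [this, measure_empty]
    have hae : ∀ᵐ x ∂(volume.restrict E), x ∈ B := by
      rw [ae_iff]
      have hid : {x : Ck k | ¬ x ∈ B} = Bᶜ := rfl
      rw [hid]; exact hBc
    filter_upwards [hae] with x hx
    refine abs_of_nonpos ?_
    rcases eq_or_ne (u x) ⊥ with hb | hb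
    · simp [hb]
    · have := EReal.toReal_le_toReal (huneg x hx) hb (by simp)
      simpa using this
  -- a.e. bound f ≤ a + ε' on cB
  have hbotae : ∀ᵐ x ∂(volume.restrict cB), ¬(x ∈ B ∧ u x = ⊥) := by
    refine ae_restrict_of_ae ?_
    rw [ae_iff]
    have : {x | ¬¬(x ∈ B ∧ u x = ⊥)} = {x ∈ B | u x = ⊥} := by
      ext x; simp [Set.mem_setOf_eq]
    rw [this]
    exact hu.bot_null
  have hfle : ∀ᵐ x ∂(volume.restrict cB), (u x).toReal ≤ a + ε' := by
    filter_upwards [ae_restrict_mem measurableSet_closedBall, hbotae] with x hx hnb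
    have hxB : x ∈ B := hsubB hx
    have hub : u x ≠ ⊥ := fun hb => hnb ⟨hxB, hb⟩
    have hxρ : x ∈ ball x0 ρu := mem_ball.2 (lt_of_le_of_lt (mem_closedBall.1 hx) hrρ)
    have hlt : u x < ((a + ε' : ℝ) : EReal) := hρu x ⟨hxρ, hxB⟩
    have := EReal.toReal_le_toReal hlt.le hub (EReal.coe_ne_top _)
    simpa only [EReal.toReal_coe] using this
  set h : Ck k → ℝ := fun x => (a + ε') - (u x).toReal with hhdef
  have hconst : Integrable (fun _ : Ck k => a + ε') (volume.restrict cB) :=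
    integrableOn_const hcBlt.ne
  have hhint : Integrable h (volume.restrict cB) := hconst.sub hfint
  have hhnn : 0 ≤ᵐ[volume.restrict cB] h := by
    filter_upwards [hfle] with x hx
    simp only [hhdef, Pi.zero_apply]
    linarith
  have h1 : ∫ y in E, h y ∂volume ≤ ∫ y in cB, h y ∂volume :=
    setIntegral_mono_set hhint hhnn (HasSubset.Subset.eventuallyLE hEsub)
  have hsm := submean_int u a hu hux0.symm r hrpos hsubB
  have h2 : ∫ y in cB, h y ∂volume ≤ ε' * c := by
    rw [hhdef, integral_sub hconst hfint, setIntegral_const, smul_eq_mul]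
    have : volume.real cB = c := rfl
    rw [this]
    linarith
  have h3 : ∫ y in E, -(u y).toReal ∂volume
      = (∫ y in E, h y ∂volume) - (a + ε') * (volume E).toReal := by
    have heq : (fun y => -(u y).toReal) = fun y => h y - (a + ε') := by
      funext y; simp only [hhdef]; ring
    have hhOn : IntegrableOn h cB volume := hhint
    have hhintE : IntegrableOn h E volume := hhOn.mono_set hEsub
    rw [heq, integral_sub hhintE (integrableOn_const hElt.ne),
      setIntegral_const, smul_eq_mul]
    rw [measureReal_def]; ring
  have hvolEnn : 0 ≤ (volume E).toReal := ENNReal.toReal_nonneg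
  have hbound : ∫ y in E, |(u y).toReal| ∂volume ≤ (ε/2) * c := by
    rw [habs, h3]
    have hA : -(a + ε') * (volume E).toReal ≤ M * (volume E).toReal := by
      refine mul_le_mul_of_nonneg_right ?_ hvolEnn
      have := neg_le_abs a
      rw [hMdef]; linarith
    have hB : M * (volume E).toReal ≤ M * (εA * c) :=
      mul_le_mul_of_nonneg_left hvolE hMpos.le
    have hMεA : M * εA = ε' := by
      rw [hεAdef]; field_simp
    have : (ε/2) * c = ε' * c + ε' * c := by rw [hε'def]; ring
    rw [this]
    nlinarith [h1.trans h2]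
  -- conclude
  have hcb : volume cB = volume (ball x0 r) := by
    refine le_antisymm ?_ (measure_mono ball_subset_closedBall)
    calc volume cB = volume (ball x0 r ∪ sphere x0 r) := by rw [ball_union_sphere]
      _ ≤ volume (ball x0 r) + volume (sphere x0 r) := measure_union_le _ _
      _ = volume (ball x0 r) := by
          rw [Measure.addHaar_sphere_of_ne_zero _ x0 hrpos.ne', add_zero]
  have hcball : (volume (ball x0 r)).toReal = c := by rw [← hcb]
  have hQnn : 0 ≤ ∫ y in E, |(u y).toReal| ∂volume :=
    integral_nonneg fun y => abs_nonneg _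
  rw [Real.dist_eq, sub_zero, abs_of_nonneg (div_nonneg hQnn (hcball ▸ hcpos.le))]
  rw [hcball, div_lt_iff₀ hcpos]
  calc ∫ y in E, |(u y).toReal| ∂volume ≤ (ε/2) * c := hbound
    _ < ε * c := by nlinarith
end
end

section
/- With $V=\bigcap_{j=1}^m\{x:|u_j(x)-u_j(x_0)|<\delta\}$ as above and $u$ plurisubharmonic on $\mathbb{B}$ with $u(x_0)>-\infty$, one has $c_r^{-1}\int_{B(x_0,r)\cap V}|u-u(x_0)|\,d\mathrm{Leb}\to 0$ as $r\to 0$, where $c_r=\mathrm{Leb}(B(x_0,r))$. -/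
open MeasureTheory Metric Filter
open scoped ENNReal Topology

noncomputable section

/-- for bounded psh `u₁,…,u_m` on the unit ball and
`V = ⋂ⱼ {|uⱼ - uⱼ(x₀)| < δ}`, and `u` psh with `u(x₀) > -∞`, one has
`c_r⁻¹ ∫_{B(x₀,r) ∩ V} |u - u(x₀)| dLeb → 0` as `r → 0⁺` (`x₀` is a plurifine Lebesgue
point of `u`). -/
theorem stmt10 (k m : ℕ) (x0 : Ck k) (hx0 : x0 ∈ ball (0 : Ck k) 1)
    (v : Fin m → Ck k → ℝ)
    (hv : ∀ j, IsPSH (ball (0 : Ck k) 1) (fun x => ((v j x : ℝ) : EReal)))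
    (hvbd : ∀ j, ∃ C : ℝ, ∀ x ∈ ball (0 : Ck k) 1, |v j x| ≤ C)
    (δ : ℝ) (hδ : 0 < δ)
    (u : Ck k → EReal) (hu : IsPSH (ball (0 : Ck k) 1) u)
    (hufin : u x0 ≠ ⊥) :
    Tendsto (fun r : ℝ =>
        (∫ y in ball x0 r ∩ {x | ∀ j, |v j x - v j x0| < δ},
          |(u y).toReal - (u x0).toReal| ∂volume) / (volume (ball x0 r)).toReal)
      (𝓝[>] 0) (𝓝 0) := by
  set U : Set (Ck k) := ball (0 : Ck k) 1 with hU
  set f : Ck k → ℝ := fun y => (u y).toReal with hf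
  set a : ℝ := (u x0).toReal with ha
  have hutop : u x0 ≠ ⊤ := hu.ne_top x0 hx0
  have hux0 : u x0 = (a : EReal) := (EReal.coe_toReal hutop hufin).symm
  -- volume of closed ball equals volume of open ball
  have hvol : ∀ r : ℝ, 0 < r → volume (closedBall x0 r) = volume (ball x0 r) := by
    intro r hr
    rcases subsingleton_or_nontrivial (Ck k) with hs | hs
    · congr 1
      refine Set.Subset.antisymm (fun y hy => ?_) ball_subset_closedBall
      simp [mem_ball, Subsingleton.elim y x0, hr]
    · exact Measure.addHaar_closedBall_eq_addHaar_ball _ _ _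
  rw [NormedAddCommGroup.tendsto_nhds_zero]
  intro ε hε
  -- upper semicontinuity: u < a + ε/4 near x0
  have husc := hu.usc x0 hx0 ((a + ε / 4 : ℝ) : EReal)
    (by show u x0 < _; rw [hux0]; exact_mod_cast (by linarith : a < a + ε / 4))
  rw [isOpen_ball.nhdsWithin_eq hx0, Metric.eventually_nhds_iff] at husc
  obtain ⟨r1, hr1, husc⟩ := husc
  have hd : dist x0 (0 : Ck k) < 1 := mem_ball.1 hx0
  set r0 : ℝ := min r1 ((1 - dist x0 (0 : Ck k)) / 2) with hr0def
  have hr0 : 0 < r0 := lt_min hr1 (by linarith)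
  -- for r < r0, closedBall x0 r ⊆ U
  have hsubU : ∀ r : ℝ, r < r0 → closedBall x0 r ⊆ U := by
    intro r hr y hy
    have h1 : dist y x0 ≤ r := mem_closedBall.1 hy
    have h2 : r0 ≤ (1 - dist x0 (0 : Ck k)) / 2 := min_le_right _ _
    have := dist_triangle y x0 (0 : Ck k)
    exact mem_ball.2 (by linarith)
  filter_upwards [Ioo_mem_nhdsGT_of_mem (Set.left_mem_Ico.2 hr0)] with r hr
  obtain ⟨hrpos, hrlt⟩ := hr
  set cb := closedBall x0 r with hcb
  have hcbU : cb ⊆ U := hsubU r hrlt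
  have hcbB : cb ⊆ ball x0 r1 := fun y hy =>
    mem_ball.2 (lt_of_le_of_lt (mem_closedBall.1 hy) (lt_of_lt_of_le hrlt (min_le_left _ _)))
  -- integrability on cb
  have hI : IntegrableOn f cb volume :=
    hu.loc_int.integrableOn_compact_subset hcbU (isCompact_closedBall _ _)
  have hcbfin : volume cb < ⊤ := measure_closedBall_lt_top
  have hIc : IntegrableOn (fun _ => a) cb volume :=
    integrableOn_const hcbfin.ne
  have hIsub : IntegrableOn (fun y => f y - a) cb volume := hI.sub hIc
  have hIabs : IntegrableOn (fun y => |f y - a|) cb volume := hIsub.abs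
  have hImax : IntegrableOn (fun y => max (f y - a) 0) cb volume :=
    hIsub.sup (integrableOn_const hcbfin.ne)
  -- a.e. bound: f ≤ a + ε/4 on cb
  have hbot : ∀ᵐ y ∂volume, ¬(y ∈ U ∧ u y = ⊥) := by
    rw [ae_iff]
    simpa [Set.setOf_and] using hu.bot_null
  have hae : ∀ᵐ y ∂volume.restrict cb, max (f y - a) 0 ≤ ε / 4 := by
    filter_upwards [ae_restrict_mem measurableSet_closedBall, ae_restrict_of_ae hbot]
      with y hy hyb
    have hyU : y ∈ U := hcbU hy
    have hyne : u y ≠ ⊥ := fun h => hyb ⟨hyU, h⟩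
    have hlt : u y < ((a + ε / 4 : ℝ) : EReal) := husc (mem_ball.1 (hcbB hy))
    have : f y ≤ a + ε / 4 := by
      have := EReal.toReal_le_toReal hlt.le hyne (EReal.coe_ne_top _)
      rw [EReal.toReal_coe] at this; exact this
    have h4 : (0 : ℝ) ≤ ε / 4 := by linarith
    exact max_le (by linarith) h4
  -- submean: a * vol ≤ ∫ f
  have hsm := hu.submean x0 hx0 r hrpos hcbU
  rw [hux0] at hsm
  have hsm' : a ≤ ⨍ y in cb, f y ∂volume := EReal.coe_le_coe_iff.1 hsm
  have hvolpos : 0 < (volume cb).toReal := by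
    rw [hvol r hrpos]
    exact ENNReal.toReal_pos (measure_ball_pos _ _ hrpos).ne' measure_ball_lt_top.ne
  have hint_f : a * (volume cb).toReal ≤ ∫ y in cb, f y ∂volume := by
    rw [setAverage_eq, smul_eq_mul] at hsm'
    calc a * (volume cb).toReal ≤ (((volume cb).toReal)⁻¹ * ∫ y in cb, f y ∂volume)
          * (volume cb).toReal := by
          exact mul_le_mul_of_nonneg_right hsm' hvolpos.le
      _ = ∫ y in cb, f y ∂volume := by field_simp
  -- split the integral
  have hsplit : ∫ y in cb, |f y - a| ∂volume
      = (∫ y in cb, (a - f y) ∂volume) + 2 * ∫ y in cb, max (f y - a) 0 ∂volume := by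
    have hpt : ∀ y, |f y - a| = (a - f y) + 2 * max (f y - a) 0 := by
      intro y
      rcases le_total (f y) a with h | h
      · rw [abs_of_nonpos (by linarith), max_eq_right (by linarith)]; ring
      · rw [abs_of_nonneg (by linarith), max_eq_left (by linarith)]; ring
    simp_rw [hpt]
    have h1 : IntegrableOn (fun y => a - f y) cb volume := hIc.sub hI
    have h2 : IntegrableOn (fun y => 2 * max (f y - a) 0) cb volume := hImax.const_mul 2
    rw [integral_add h1 h2, integral_const_mul]
  have hterm1 : (∫ y in cb, (a - f y) ∂volume) ≤ 0 := by
    rw [integral_sub hIc hI, setIntegral_const, smul_eq_mul]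
    linarith [show volume.real cb * a = a * (volume cb).toReal from mul_comm _ _]
  have hterm2 : (∫ y in cb, max (f y - a) 0 ∂volume) ≤ ε / 4 * (volume cb).toReal := by
    have := integral_mono_ae hImax (integrableOn_const hcbfin.ne) hae
    rwa [setIntegral_const, smul_eq_mul, mul_comm] at this
  have hmain : ∫ y in cb, |f y - a| ∂volume ≤ ε / 2 * (volume cb).toReal := by
    rw [hsplit]; linarith
  -- numerator bound
  have hnum : (∫ y in ball x0 r ∩ {x | ∀ j, |v j x - v j x0| < δ}, |f y - a| ∂volume)
      ≤ ∫ y in cb, |f y - a| ∂volume := by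
    apply setIntegral_mono_set hIabs
    · exact Filter.Eventually.of_forall fun y => abs_nonneg _
    · exact HasSubset.Subset.eventuallyLE
        ((Set.inter_subset_left).trans ball_subset_closedBall)
  have hnum0 : 0 ≤ (∫ y in ball x0 r ∩ {x | ∀ j, |v j x - v j x0| < δ}, |f y - a| ∂volume) :=
    integral_nonneg fun y => abs_nonneg _
  have hden : (volume cb).toReal = (volume (ball x0 r)).toReal := by rw [hvol r hrpos]
  have hfinal : (∫ y in ball x0 r ∩ {x | ∀ j, |v j x - v j x0| < δ}, |f y - a| ∂volume)
      / (volume (ball x0 r)).toReal ≤ ε / 2 := by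
    rw [div_le_iff₀ (hden ▸ hvolpos)]
    calc _ ≤ ∫ y in cb, |f y - a| ∂volume := hnum
      _ ≤ ε / 2 * (volume cb).toReal := hmain
      _ = ε / 2 * (volume (ball x0 r)).toReal := by rw [hden]
  rw [Real.norm_eq_abs, abs_of_nonneg (div_nonneg hnum0 ENNReal.toReal_nonneg)]
  linarith
end
end

section
/- Let $U\subset\mathbb{C}^k$ be open and let $\varphi:U\to\mathbb{R}$ be a Borel function. Suppose there exist: (a) a negative plurisubharmonic function $u$ on $U$ with $|\varphi|\le -u$ everywhere; (b) a pluripolar Borel set $E$ such that for every $x_0\in U\setminus E$ there are finitely many bounded psh functions $v_1,\dots,v_m$ on $U$ and $\delta>0$ with $\varphi$ continuous at $x_0$ along the set $V=\bigcap_j\{|v_j-v_j(x_0)|<\delta\}$ (i.e. $\varphi(x')\to\varphi(x_0)$ as $x'\to x_0$, $x'\in V$), and $u(x_0)>-\infty$. Then every $x_0\in U\setminus E$ is a Lebesgue point of $\varphi$: $\lim_{r\to0}\frac{1}{\mathrm{Leb}(B(x_0,r))}\int_{B(x_0,r)}|\varphi-\varphi(x_0)|\,d\mathrm{Leb}=0$.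 -/
open MeasureTheory Metric Filter
open scoped ENNReal Topology

noncomputable section

/-- A set `A ⊆ U` is pluripolar if it is contained in the `-∞` locus of a psh function on `U`
(not identically `-∞`, as built into `IsPSH`). -/
def Pluripolar {k : ℕ} (U A : Set (Ck k)) : Prop :=
  ∃ w : Ck k → EReal, IsPSH U w ∧ ∀ x ∈ A, w x = ⊥

namespace Stmt11Aux
variable {k : ℕ}

lemma sphere_null (x : Ck k) {r : ℝ} (hr : 0 < r) : volume (sphere x r) = 0 := by
  rcases Nat.eq_zero_or_pos k with h | h
  · subst h
    have : sphere x r = (∅ : Set (Ck 0)) := by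
      ext y; simp [Subsingleton.elim y x, hr.ne]
    simp [this]
  · haveI : Nontrivial (Ck k) := by
      refine ⟨0, EuclideanSpace.single ⟨0, h⟩ 1, ?_⟩
      intro hc
      have := congrArg (fun v : Ck k => v ⟨0, h⟩) hc.symm
      simp [EuclideanSpace.single] at this
    exact Measure.addHaar_sphere volume x r

lemma ball_ae_closedBall (x : Ck k) {r : ℝ} (hr : 0 < r) :
    (ball x r : Set (Ck k)) =ᵐ[volume] closedBall x r := by
  refine (MeasureTheory.ae_eq_set (μ := volume)).2 ⟨?_, ?_⟩
  · rw [Set.diff_eq_empty.2 ball_subset_closedBall]; simp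
  · refine measure_mono_null ?_ (sphere_null x hr)
    intro y hy
    rcases hy with ⟨h1, h2⟩
    simp only [mem_closedBall] at h1
    simp only [mem_ball, not_lt] at h2
    simp only [mem_sphere]
    exact le_antisymm h1 h2

lemma vol_ball_eq (x : Ck k) {r : ℝ} (hr : 0 < r) :
    volume (ball x r) = volume (closedBall x r) := measure_congr (ball_ae_closedBall x hr)

lemma intBall_eq (x : Ck k) {r : ℝ} (hr : 0 < r) (f : Ck k → ℝ) :
    ∫ y in ball x r, f y ∂volume = ∫ y in closedBall x r, f y ∂volume :=
  setIntegral_congr_set (ball_ae_closedBall x hr)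

lemma lower_bound {U : Set (Ck k)} {w : Ck k → EReal} (hw : IsPSH U w)
    {x0 : Ck k} (hx0 : x0 ∈ U) (hbot : w x0 ≠ ⊥) {r : ℝ} (hr : 0 < r)
    (hsub : closedBall x0 r ⊆ U) :
    (w x0).toReal * (volume (closedBall x0 r)).toReal ≤
      ∫ y in closedBall x0 r, (w y).toReal ∂volume := by
  have h := hw.submean x0 hx0 r hr hsub
  have htop := hw.ne_top x0 hx0
  have hco : ((w x0).toReal : EReal) = w x0 := EReal.coe_toReal htop hbot
  rw [← hco] at h
  have h2 : (w x0).toReal ≤ ⨍ y in closedBall x0 r, (w y).toReal ∂volume :=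
    EReal.coe_le_coe_iff.mp h
  rw [setAverage_eq, smul_eq_mul] at h2
  have hvol : 0 < (volume (closedBall x0 r)).toReal :=
    ENNReal.toReal_pos (ne_of_gt (lt_of_lt_of_le (measure_ball_pos volume x0 hr)
      (measure_mono ball_subset_closedBall))) measure_closedBall_lt_top.ne
  rw [inv_mul_eq_div, measureReal_def, le_div_iff₀ hvol] at h2
  exact h2

lemma usc_ball {U : Set (Ck k)} (hU : IsOpen U) {w : Ck k → EReal}
    (hw : UpperSemicontinuousOn w U)
    {x0 : Ck k} (hx0 : x0 ∈ U) {c : EReal} (hc : w x0 < c) :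
    ∃ r > 0, closedBall x0 r ⊆ U ∧ ∀ y ∈ closedBall x0 r, w y < c := by
  have h1 := hw x0 hx0 c hc
  rw [nhdsWithin_eq_nhds.2 (hU.mem_nhds hx0)] at h1
  rcases Metric.eventually_nhds_iff_ball.mp h1 with ⟨ε, hε, hball⟩
  rcases Metric.isOpen_iff.mp hU x0 hx0 with ⟨ε', hε', hU'⟩
  have hmin : 0 < min ε ε' := lt_min hε hε'
  have hhalf : min ε ε' / 2 < min ε ε' := by linarith
  refine ⟨min ε ε' / 2, by positivity, ?_, ?_⟩
  · intro y hy
    apply hU'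
    have : min ε ε' / 2 < ε' := lt_of_lt_of_le hhalf (min_le_right _ _)
    exact lt_of_le_of_lt (mem_closedBall.mp hy) this
  · intro y hy
    apply hball
    have : min ε ε' / 2 < ε := lt_of_lt_of_le hhalf (min_le_left _ _)
    exact lt_of_le_of_lt (mem_closedBall.mp hy) this

end Stmt11Aux

set_option maxHeartbeats 1000000 in
/-- let `φ : U → ℝ` be Borel. Suppose (a) `|φ| ≤ -u` everywhere on `U` for a
negative psh `u`; (b) there is a pluripolar Borel set `E` such that every `x₀ ∈ U \ E`
satisfies `u(x₀) > -∞` and `φ` is continuous at `x₀` along a plurifine neighborhood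
`V = ⋂ⱼ {|vⱼ - vⱼ(x₀)| < δ}` given by finitely many bounded psh functions. Then every
`x₀ ∈ U \ E` is a Lebesgue point of `φ`. -/
theorem stmt11 (k : ℕ) (U : Set (Ck k)) (hU : IsOpen U)
    (φ : Ck k → ℝ) (hφ : Measurable φ)
    (u : Ck k → EReal) (hu : IsPSH U u) (huneg : ∀ x ∈ U, u x ≤ 0)
    (hbound : ∀ x ∈ U, ((|φ x| : ℝ) : EReal) ≤ -u x)
    (E : Set (Ck k)) (hE : MeasurableSet E) (hEpp : Pluripolar U E)
    (hfine : ∀ x0 ∈ U \ E, u x0 ≠ ⊥ ∧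
      ∃ (m : ℕ) (v : Fin m → Ck k → ℝ) (δ : ℝ), 0 < δ ∧
        (∀ j, IsPSH U (fun x => ((v j x : ℝ) : EReal))) ∧
        (∀ j, ∃ C : ℝ, ∀ x ∈ U, |v j x| ≤ C) ∧
        Tendsto φ (𝓝[{x | ∀ j, |v j x - v j x0| < δ} \ {x0}] x0) (𝓝 (φ x0))) :
    ∀ x0 ∈ U \ E,
      Tendsto (fun r : ℝ =>
          (∫ y in ball x0 r, |φ y - φ x0| ∂volume) / (volume (ball x0 r)).toReal)
        (𝓝[>] 0) (𝓝 0) := by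
  intro x0 hx0
  have hUx0 : x0 ∈ U := hx0.1
  rcases Nat.eq_zero_or_pos k with hk0 | hkpos
  · subst hk0
    have hconst : (fun r : ℝ =>
        (∫ y in ball x0 r, |φ y - φ x0| ∂volume) / (volume (ball x0 r)).toReal)
        = fun _ => (0 : ℝ) := by
      funext r
      have hzero : ∀ y : Ck 0, |φ y - φ x0| = 0 := by
        intro y; rw [Subsingleton.elim y x0]; simp
      simp [hzero]
    rw [hconst]
    exact tendsto_const_nhds
  haveI hnt : Nontrivial (Ck k) := by
    refine ⟨0, EuclideanSpace.single ⟨0, hkpos⟩ 1, ?_⟩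
    intro hc
    have := congrArg (fun v : Ck k => v ⟨0, hkpos⟩) hc.symm
    simp [EuclideanSpace.single] at this
  obtain ⟨hubot, m, v, δ, hδ, hvpsh, hvbd, hcont⟩ := hfine x0 hx0
  set a : ℝ := (u x0).toReal with ha_def
  have hutop := hu.ne_top x0 hUx0
  have hua : u x0 = ((a : ℝ) : EReal) := (EReal.coe_toReal hutop hubot).symm
  have ha0 : a ≤ 0 := by
    have h := huneg x0 hUx0
    rw [hua] at h
    exact_mod_cast h
  set M : ℝ := 1 - a with hM_def
  set f : Ck k → ℝ := fun y => (u y).toReal with hf_def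
  have hφle : ∀ y ∈ U, u y ≠ ⊥ → |φ y| ≤ -f y := by
    intro y hy hb
    have h := hbound y hy
    have hcoe : u y = ((f y : ℝ) : EReal) := (EReal.coe_toReal (hu.ne_top y hy) hb).symm
    rw [hcoe, ← EReal.coe_neg] at h
    exact_mod_cast h
  have hφx0 : |φ x0| ≤ -a := by simpa using hφle x0 hUx0 hubot
  rw [NormedAddCommGroup.tendsto_nhds_zero]
  intro ε0 hε0
  set ε : ℝ := ε0 / 4 with hε_def
  have hε : 0 < ε := by positivity
  have hMa : 0 < M - a := by rw [hM_def]; linarith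
  set c : ℝ := (m : ℝ) * (M - a) with hc_def
  have hc0 : 0 ≤ c := mul_nonneg (Nat.cast_nonneg m) hMa.le
  set η : ℝ := min δ (ε * δ / (c + 1)) with hη_def
  have hη : 0 < η := lt_min hδ (by positivity)
  have hηδ : η ≤ δ := min_le_left _ _
  set K : ℝ := (M - a) / δ with hK_def
  have hK : 0 ≤ K := div_nonneg hMa.le hδ.le
  -- continuity radius
  obtain ⟨r4, hr4, hcont'⟩ := (Metric.tendsto_nhdsWithin_nhds.mp hcont) ε hε
  -- usc radius for u
  obtain ⟨r1, hr1, hr1U, hr1u⟩ := Stmt11Aux.usc_ball hU hu.usc hUx0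
    (c := ((a + ε : ℝ) : EReal)) (by rw [hua]; exact_mod_cast (by linarith : a < a + ε))
  -- usc radii for the v j
  have hr2ex : ∀ j, ∃ r2 > 0, closedBall x0 r2 ⊆ U ∧
      ∀ y ∈ closedBall x0 r2, v j y < v j x0 + η := by
    intro j
    obtain ⟨r2, h1, h2, h3⟩ := Stmt11Aux.usc_ball hU (hvpsh j).usc hUx0
      (c := ((v j x0 + η : ℝ) : EReal)) (by exact_mod_cast (by linarith : v j x0 < v j x0 + η))
    exact ⟨r2, h1, h2, fun y hy => by exact_mod_cast h3 y hy⟩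
  choose r2 hr2pos hr2U hr2v using hr2ex
  have hev : ∀ᶠ r in 𝓝[>] (0:ℝ), 0 < r ∧ r ≤ r1 ∧ r < r4 ∧ ∀ j, r ≤ r2 j := by
    have h1 : ∀ᶠ r in 𝓝[>] (0:ℝ), r ∈ Set.Ioo 0 r1 :=
      Ioo_mem_nhdsGT_of_mem ⟨le_refl 0, hr1⟩
    have h4 : ∀ᶠ r in 𝓝[>] (0:ℝ), r ∈ Set.Ioo 0 r4 :=
      Ioo_mem_nhdsGT_of_mem ⟨le_refl 0, hr4⟩
    have hall : ∀ᶠ r in 𝓝[>] (0:ℝ), ∀ j, r ∈ Set.Ioo 0 (r2 j) :=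
      eventually_all.2 fun j => Ioo_mem_nhdsGT_of_mem ⟨le_refl 0, hr2pos j⟩
    filter_upwards [h1, h4, hall] with r hr1' hr4' hall'
    exact ⟨hr1'.1, hr1'.2.le, hr4'.2, fun j => (hall' j).2.le⟩
  filter_upwards [hev] with r hr
  obtain ⟨hr0, hrr1, hrr4, hrr2⟩ := hr
  set s : Set (Ck k) := ball x0 r with hs_def
  set cB : Set (Ck k) := closedBall x0 r with hcB_def
  have hsub : cB ⊆ U := fun y hy => hr1U (closedBall_subset_closedBall hrr1 hy)
  have hvol0 : 0 < volume s := measure_ball_pos volume x0 hr0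
  have hvolt : volume s < ⊤ := measure_ball_lt_top
  have hvol : 0 < (volume s).toReal := ENNReal.toReal_pos hvol0.ne' hvolt.ne
  -- a.e. facts
  have hmemae : ∀ᵐ y ∂(volume.restrict s), y ∈ s := ae_restrict_mem measurableSet_ball
  have hbotae : ∀ᵐ y ∂(volume.restrict s), u y ≠ ⊥ := by
    have hsubset : ({y | u y = ⊥} ∩ s : Set (Ck k)) ⊆ {x ∈ U | u x = ⊥} := fun y hy =>
      ⟨hsub (ball_subset_closedBall hy.2), hy.1⟩
    have h0 : volume ({y | u y = ⊥} ∩ s) = 0 := measure_mono_null hsubset hu.bot_null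
    have hss : {y : Ck k | ¬ u y ≠ ⊥} = {y | u y = ⊥} := by ext y; simp [not_not]
    rw [ae_iff, Measure.restrict_apply' measurableSet_ball, hss]
    exact h0
  have hnex0 : ∀ᵐ y ∂(volume.restrict s), y ≠ x0 := by
    rw [ae_iff]
    have hs1 : {y : Ck k | ¬ y ≠ x0} = {x0} := by ext y; simp
    rw [hs1, Measure.restrict_apply' measurableSet_ball]
    exact measure_mono_null Set.inter_subset_left (measure_singleton x0)
  -- integrability
  have hfIntC : IntegrableOn f cB volume :=
    hu.loc_int.integrableOn_compact_subset hsub (isCompact_closedBall x0 r)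
  have hfInt : IntegrableOn f s volume := hfIntC.mono_set ball_subset_closedBall
  have hvInt : ∀ j, IntegrableOn (v j) s volume := by
    intro j
    have h := (hvpsh j).loc_int
    simp only [EReal.toReal_coe] at h
    exact (h.integrableOn_compact_subset hsub (isCompact_closedBall x0 r)).mono_set
      ball_subset_closedBall
  have hφInt : IntegrableOn φ s volume := by
    refine Integrable.mono' hfInt.neg hφ.aestronglyMeasurable.restrict ?_
    filter_upwards [hmemae, hbotae] with y hys hyb
    simpa [Real.norm_eq_abs] using hφle y (hsub (ball_subset_closedBall hys)) hyb
  have hconstInt : ∀ b : ℝ, IntegrableOn (fun _ => b) s volume := fun b =>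
    integrableOn_const hvolt.ne
  have hφInt2 : IntegrableOn (fun y => |φ y - φ x0|) s volume :=
    (hφInt.sub (hconstInt (φ x0))).abs
  set g : Ck k → ℝ := fun y => max (f y) (-M) with hg_def
  have hgInt : IntegrableOn g s volume := hfInt.sup (hconstInt (-M))
  -- integral bounds
  have hIf : a * (volume s).toReal ≤ ∫ y in s, f y ∂volume := by
    have h := Stmt11Aux.lower_bound hu hUx0 hubot hr0 hsub
    rwa [← Stmt11Aux.intBall_eq x0 hr0, ← Stmt11Aux.vol_ball_eq x0 hr0] at h
  have hIg : ∫ y in s, g y ∂volume ≤ (a + ε) * (volume s).toReal := by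
    have hg_ae : ∀ᵐ y ∂(volume.restrict s), g y ≤ a + ε := by
      filter_upwards [hmemae, hbotae] with y hys hyb
      have hycB : y ∈ cB := ball_subset_closedBall hys
      have h1 : u y < ((a + ε : ℝ) : EReal) :=
        hr1u y (closedBall_subset_closedBall hrr1 hycB)
      have hcoe : u y = ((f y : ℝ) : EReal) :=
        (EReal.coe_toReal (hu.ne_top y (hsub hycB)) hyb).symm
      rw [hcoe] at h1
      have h2 : f y ≤ a + ε := le_of_lt (by exact_mod_cast h1)
      have h3 : -M ≤ a + ε := by rw [hM_def]; linarith
      exact max_le h2 h3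
    calc ∫ y in s, g y ∂volume ≤ ∫ _ in s, (a + ε) ∂volume :=
          integral_mono_ae hgInt (hconstInt (a + ε)) hg_ae
      _ = (a + ε) * (volume s).toReal := by rw [setIntegral_const, smul_eq_mul, mul_comm, measureReal_def]
  have hIv : ∀ j, ∫ y in s, (v j x0 + η - v j y) ∂volume ≤ η * (volume s).toReal := by
    intro j
    have hlow : v j x0 * (volume s).toReal ≤ ∫ y in s, v j y ∂volume := by
      have h := Stmt11Aux.lower_bound (hvpsh j) hUx0 (by simp) hr0 hsub
      simp only [EReal.toReal_coe] at h
      rwa [← Stmt11Aux.intBall_eq x0 hr0, ← Stmt11Aux.vol_ball_eq x0 hr0] at h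
    have heq : ∫ y in s, (v j x0 + η - v j y) ∂volume
        = (v j x0 + η) * (volume s).toReal - ∫ y in s, v j y ∂volume := by
      rw [integral_sub (hconstInt (v j x0 + η)) (hvInt j), setIntegral_const, smul_eq_mul,
        mul_comm, measureReal_def]
    rw [heq]
    nlinarith [hvol]
  -- master pointwise bound
  have hmaster : ∀ᵐ y ∂(volume.restrict s),
      |φ y - φ x0| ≤ ε + (g y - f y) + ∑ j, K * (v j x0 + η - v j y) := by
    filter_upwards [hmemae, hbotae, hnex0] with y hys hyb hyx
    have hycB : y ∈ cB := ball_subset_closedBall hys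
    have hyU : y ∈ U := hsub hycB
    have hgf : 0 ≤ g y - f y := by
      have hfg : f y ≤ g y := le_max_left (f y) (-M)
      linarith
    have hterm : ∀ j, 0 ≤ v j x0 + η - v j y := by
      intro j
      have := hr2v j y (closedBall_subset_closedBall (hrr2 j) hycB)
      linarith
    have hsumnn : 0 ≤ ∑ j, K * (v j x0 + η - v j y) :=
      Finset.sum_nonneg fun j _ => mul_nonneg hK (hterm j)
    by_cases hyV : ∀ j, |v j y - v j x0| < δ
    · have hdist : dist y x0 < r4 := lt_of_lt_of_le (mem_ball.mp hys) hrr4.le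
      have hmem : y ∈ {x | ∀ j, |v j x - v j x0| < δ} \ {x0} := ⟨hyV, by simpa using hyx⟩
      have h := hcont' hmem hdist
      rw [Real.dist_eq] at h
      linarith
    · push_neg at hyV
      obtain ⟨j0, hj0⟩ := hyV
      have hup : v j0 y < v j0 x0 + η :=
        hr2v j0 y (closedBall_subset_closedBall (hrr2 j0) hycB)
      have hlow : v j0 y ≤ v j0 x0 - δ := by
        rcases le_abs.mp hj0 with h | h
        · linarith
        · linarith
      have h1 : |φ y - φ x0| ≤ -f y + -a := by
        have htr : |φ y - φ x0| ≤ |φ y| + |φ x0| := by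
          have := abs_add_le (φ y) (-φ x0)
          simpa [sub_eq_add_neg, abs_neg] using this
        exact le_trans htr (add_le_add (hφle y hyU hyb) hφx0)
      have h2 : -f y ≤ M + (g y - f y) := by
        have hgM : -M ≤ g y := le_max_right _ _
        linarith
      have h3 : M + -a ≤ K * (v j0 x0 + η - v j0 y) := by
        have hδ' : δ ≤ v j0 x0 + η - v j0 y := by linarith
        have hKδ : M + -a = K * δ := by
          rw [hK_def, div_mul_cancel₀ _ hδ.ne']; ring
        rw [hKδ]
        exact mul_le_mul_of_nonneg_left hδ' hK
      have h4 : K * (v j0 x0 + η - v j0 y) ≤ ∑ j, K * (v j x0 + η - v j y) :=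
        Finset.single_le_sum (fun j _ => mul_nonneg hK (hterm j)) (Finset.mem_univ j0)
      linarith
  -- integrate the master bound
  have hF0 : IntegrableOn (fun y => g y - f y) s volume := hgInt.sub hfInt
  have hFj : ∀ j, IntegrableOn (fun y => v j x0 + η - v j y) s volume := fun j =>
    (hconstInt (v j x0 + η)).sub (hvInt j)
  have hFj' : ∀ j, IntegrableOn (fun y => K * (v j x0 + η - v j y)) s volume := fun j =>
    (hFj j).const_mul K
  have hF1 : IntegrableOn (fun y => ε + (g y - f y)) s volume := (hconstInt ε).add hF0
  have hF2 : IntegrableOn (fun y => ∑ j, K * (v j x0 + η - v j y)) s volume :=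
    integrable_finset_sum _ fun j _ => hFj' j
  have hRHSInt : IntegrableOn
      (fun y => ε + (g y - f y) + ∑ j, K * (v j x0 + η - v j y)) s volume := hF1.add hF2
  have step1 : ∫ y in s, |φ y - φ x0| ∂volume ≤
      ∫ y in s, (ε + (g y - f y) + ∑ j, K * (v j x0 + η - v j y)) ∂volume :=
    integral_mono_ae hφInt2 hRHSInt hmaster
  have step2 : ∫ y in s, (ε + (g y - f y) + ∑ j, K * (v j x0 + η - v j y)) ∂volume
      = (volume s).toReal * ε + ((∫ y in s, g y ∂volume) - ∫ y in s, f y ∂volume)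
        + ∑ j, K * ∫ y in s, (v j x0 + η - v j y) ∂volume := by
    rw [integral_add hF1 hF2, integral_add (hconstInt ε) hF0, integral_sub hgInt hfInt,
      setIntegral_const, smul_eq_mul, measureReal_def, integral_finset_sum _ fun j _ => hFj' j]
    congr 1
    exact Finset.sum_congr rfl fun j _ => integral_const_mul K _
  have step3 : ∑ j, K * ∫ y in s, (v j x0 + η - v j y) ∂volume
      ≤ (m : ℝ) * (K * (η * (volume s).toReal)) := by
    calc ∑ j, K * ∫ y in s, (v j x0 + η - v j y) ∂volume
        ≤ ∑ _j : Fin m, K * (η * (volume s).toReal) :=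
          Finset.sum_le_sum fun j _ => mul_le_mul_of_nonneg_left (hIv j) hK
      _ = (m : ℝ) * (K * (η * (volume s).toReal)) := by
          rw [Finset.sum_const, Finset.card_univ, Fintype.card_fin, nsmul_eq_mul]
  have hgf_bound : (∫ y in s, g y ∂volume) - ∫ y in s, f y ∂volume
      ≤ ε * (volume s).toReal := by
    have hh : (a + ε) * (volume s).toReal - a * (volume s).toReal
        = ε * (volume s).toReal := by ring
    linarith
  have hmkv : (m : ℝ) * (K * (η * (volume s).toReal)) = (c / δ * η) * (volume s).toReal := by
    rw [hK_def, hc_def]; ring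
  have hIabs : ∫ y in s, |φ y - φ x0| ∂volume ≤
      (2 * ε + c / δ * η) * (volume s).toReal := by
    have hexp : (2 * ε + c / δ * η) * (volume s).toReal
        = (volume s).toReal * ε + ε * (volume s).toReal + (c / δ * η) * (volume s).toReal := by
      ring
    rw [step2] at step1
    linarith
  have hηc : c / δ * η ≤ ε := by
    have hη2 : η ≤ ε * δ / (c + 1) := min_le_right _ _
    have h1 : c / δ * η ≤ c / δ * (ε * δ / (c + 1)) :=
      mul_le_mul_of_nonneg_left hη2 (div_nonneg hc0 hδ.le)
    have h2 : c / δ * (ε * δ / (c + 1)) = ε * (c / (c + 1)) := by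
      field_simp
    have h3 : c / (c + 1) ≤ 1 := by
      rw [div_le_one (by linarith)]; linarith
    calc c / δ * η ≤ ε * (c / (c + 1)) := by rw [← h2]; exact h1
      _ ≤ ε * 1 := mul_le_mul_of_nonneg_left h3 hε.le
      _ = ε := mul_one ε
  have hI0 : 0 ≤ ∫ y in s, |φ y - φ x0| ∂volume :=
    integral_nonneg fun y => abs_nonneg _
  have hfinal : (∫ y in s, |φ y - φ x0| ∂volume) / (volume s).toReal < ε0 := by
    rw [div_lt_iff₀ hvol]
    have : (2 * ε + c / δ * η) * (volume s).toReal < ε0 * (volume s).toReal := by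
      have h3ε : 2 * ε + c / δ * η ≤ 3 * ε := by linarith
      have : 3 * ε < ε0 := by rw [hε_def]; linarith
      nlinarith
    exact lt_of_le_of_lt hIabs this
  rw [Real.norm_eq_abs, abs_of_nonneg (div_nonneg hI0 hvol.le)]
  exact hfinal
end
end
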